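/- Let X_n ⊆ {0,1}^D be a set of n pairwise distinct binary vectors and let r = ⌈√n⌉. Then there exists a seven-layer Boolean threshold network with layer sizes D, r + D, 2r, 2⌈log₂ r⌉, 2r, rD, D (i.e., a composition of six threshold layers) whose composition maps x to x for every x ∈ X_n; in particular, it is a perfect autoencoder for X_n whose middle hidden layer has 2⌈log₂ √n⌉ nodes and whose remaining hidden layers have (D + 5)⌈√n⌉ + D nodes in total. -/

import Mathlib

/-- A Boolean threshold function: there are integer weights `a` and an integer
threshold `θ` such that `f x = 1` iff `∑ i, a i * x i ≥ θ` (bits as integers 0/1). -/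
def IsThresholdFun {ι : Type*} [Fintype ι] (f : (ι → Bool) → Bool) : Prop :=
  ∃ (a : ι → ℤ) (θ : ℤ), ∀ x, f x = decide (θ ≤ ∑ i, a i * (if x i then 1 else 0))

/-- A threshold layer: each coordinate function is a Boolean threshold function. -/
def IsThresholdLayer {ι κ : Type*} [Fintype ι] (F : (ι → Bool) → (κ → Bool)) : Prop :=
  ∀ j, IsThresholdFun (fun x => F x j)

/-- The step vector `h^i[s]`: coordinate `j` is 1 iff `j ≤ i`. -/
def stepVec (s i : ℕ) : Fin s → Bool := fun j => decide (j.val ≤ i)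

/-- `i2b d j`: the `d`-bit binary representation of `j`. -/
def i2b (d j : ℕ) : Fin d → Bool := fun k => j.testBit k.val

/-- Integer dot product of a weight vector with a bit vector. -/
def dotInt {ι : Type*} [Fintype ι] (a : ι → ℤ) (x : ι → Bool) : ℤ :=
  ∑ i, a i * (if x i then 1 else 0)

-- ### auxiliary machinery

def thrC {ι : Type*} [Fintype ι] (a : ι → ℤ) (θ : ℤ) : (ι → Bool) → Bool :=
  fun u => decide (θ ≤ dotInt a u)

lemma thrC_isThreshold {ι : Type*} [Fintype ι] (a : ι → ℤ) (θ : ℤ) :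
    IsThresholdFun (thrC a θ) := ⟨a, θ, fun _ => rfl⟩

def telW (S : ℕ → ℤ) : ℕ → ℤ := fun k => S k - if k = 0 then 0 else S (k - 1)

lemma telW_sum (S : ℕ → ℤ) (i : ℕ) : ∑ k ∈ Finset.range (i + 1), telW S k = S i := by
  induction i with
  | zero => simp [telW]
  | succ n ih => rw [Finset.sum_range_succ, ih]; simp [telW]

lemma dotInt_stepVec {s : ℕ} (S : ℕ → ℤ) {i : ℕ} (hi : i < s) :
    dotInt (fun k : Fin s => telW S k.val) (stepVec s i) = S i := by
  have h1 : dotInt (fun k : Fin s => telW S k.val) (stepVec s i)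
      = ∑ k ∈ Finset.range s, (telW S k * (if k ≤ i then 1 else 0)) := by
    rw [dotInt, ← Fin.sum_univ_eq_sum_range (fun k => telW S k * (if k ≤ i then 1 else 0)) s]
    exact Finset.sum_congr rfl fun k _ => by simp [stepVec]
  have h2 : ∑ k ∈ Finset.range (i + 1), (telW S k * (if k ≤ i then 1 else 0))
      = ∑ k ∈ Finset.range s, (telW S k * (if k ≤ i then 1 else 0)) := by
    refine Finset.sum_subset (Finset.range_subset_range.mpr hi) ?_
    intro k hk hnk
    simp only [Finset.mem_range] at hk hnk
    rw [if_neg (by omega), mul_zero]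
  rw [h1, ← h2, ← telW_sum S i]
  exact Finset.sum_congr rfl fun k hk => by
    simp only [Finset.mem_range] at hk
    rw [if_pos (by omega), mul_one]

lemma dotInt_addCases {p s : ℕ} (a₁ : Fin p → ℤ) (a₂ : Fin s → ℤ) (u : Fin (p + s) → Bool) :
    dotInt (Fin.addCases a₁ a₂) u =
      dotInt a₁ (fun k => u (Fin.castAdd s k)) + dotInt a₂ (fun k => u (Fin.natAdd p k)) := by
  simp [dotInt, Fin.sum_univ_add]

lemma dotInt_comp' {ι κ : Type*} [Fintype ι] [Fintype κ] (e : ι ≃ κ) (a : κ → ℤ)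
    (u : κ → Bool) : dotInt (a ∘ e) (u ∘ e) = dotInt a u :=
  Equiv.sum_comp e fun j => a j * (if u j then 1 else 0)

lemma dotInt_single {ι : Type*} [Fintype ι] [DecidableEq ι] (k : ι) (u : ι → Bool) :
    dotInt (fun i => if i = k then (1:ℤ) else 0) u = if u k then 1 else 0 := by
  rw [dotInt]
  have h : ∀ i, (if i = k then (1:ℤ) else 0) * (if u i then 1 else 0)
      = if i = k then (if u i then 1 else 0) else 0 := fun i => by
    rw [ite_mul, one_mul, zero_mul]
  rw [Finset.sum_congr rfl fun i _ => h i, Finset.sum_ite_eq' Finset.univ k]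
  simp

lemma funext_addCases {p s : ℕ} {α : Sort*} {f g : Fin (p + s) → α}
    (h1 : ∀ j, f (Fin.castAdd s j) = g (Fin.castAdd s j))
    (h2 : ∀ j, f (Fin.natAdd p j) = g (Fin.natAdd p j)) : f = g :=
  funext fun j => Fin.addCases (motive := fun j => f j = g j) h1 h2 j

lemma sum_testBit (c : ℕ) : ∀ v : ℕ, v < 2 ^ c →
    ∑ b ∈ Finset.range c, 2 ^ b * (if v.testBit b then 1 else 0) = v := by
  induction c with
  | zero => intro v hv; interval_cases v; simp
  | succ c ih =>
    intro v hv
    rw [Finset.sum_range_succ']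
    have hv2 : v / 2 < 2 ^ c := by
      have : (2:ℕ) ^ (c+1) = 2 ^ c * 2 := by ring
      omega
    have h1 : ∑ b ∈ Finset.range c, 2 ^ (b+1) * (if v.testBit (b+1) then 1 else 0)
        = 2 * (v / 2) := by
      rw [← ih (v / 2) hv2, Finset.mul_sum]
      refine Finset.sum_congr rfl fun b _ => ?_
      rw [Nat.testBit_succ]
      ring
    rw [h1]
    have h0 : (if v.testBit 0 then 1 else 0) = v % 2 := by
      rw [Nat.testBit_zero]
      rcases Nat.mod_two_eq_zero_or_one v with h | h <;> simp [h]
    simp only [pow_zero, one_mul, h0]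
    omega

lemma dotInt_bits (c q : ℕ) (hq : q < 2 ^ c) :
    dotInt (fun b : Fin c => (2:ℤ) ^ (b:ℕ)) (i2b c q) = q := by
  have h := sum_testBit c q hq
  rw [dotInt]
  have h2 : ∀ b : Fin c, (2:ℤ)^(b:ℕ) * (if i2b c q b then 1 else 0)
      = (((2:ℕ) ^ (b:ℕ) * (if Nat.testBit q (b:ℕ) then 1 else 0) : ℕ) : ℤ) := by
    intro b; cases hb : Nat.testBit q b.val <;> simp [i2b, hb]
  rw [Finset.sum_congr rfl (fun b _ => h2 b),
    Fin.sum_univ_eq_sum_range (fun t => (((2:ℕ)^t * (if Nat.testBit q t then 1 else 0) : ℕ) : ℤ)) c,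
    ← Nat.cast_sum, h]

-- value of a bit vector & injectivity
def pow2W (D : ℕ) : Fin D → ℤ := fun k => (2:ℤ) ^ (k : ℕ)

lemma valB_inj (D : ℕ) {y z : Fin D → Bool}
    (h : dotInt (pow2W D) y = dotInt (pow2W D) z) : y = z := by
  have hcast : ∀ y : Fin D → Bool,
      ((finFunctionFinEquiv (fun k => if y k then (1 : Fin 2) else 0) : ℕ) : ℤ)
        = dotInt (pow2W D) y := by
    intro y
    rw [finFunctionFinEquiv_apply]
    push_cast
    rw [dotInt]
    refine Finset.sum_congr rfl fun k _ => ?_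
    cases hy : y k <;> simp [pow2W, mul_comm]
  have h1 : (finFunctionFinEquiv (fun k => if y k then (1:Fin 2) else 0) : ℕ)
      = (finFunctionFinEquiv (fun k => if z k then (1:Fin 2) else 0) : ℕ) := by
    have hy := hcast y; have hz := hcast z
    exact_mod_cast hy.trans (h.trans hz.symm)
  have h2 : (fun k => if y k then (1:Fin 2) else 0) = (fun k => if z k then (1:Fin 2) else 0) :=
    finFunctionFinEquiv.injective (Fin.val_injective h1)
  funext k
  have h3 := congrFun h2 k
  cases hy : y k <;> cases hz : z k <;> simp [hy, hz] at h3 ⊢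

lemma valB_lt (D : ℕ) (y : Fin D → Bool) :
    dotInt (pow2W D) y < (∑ k : Fin D, (2:ℤ) ^ (k:ℕ)) + 1 := by
  have : dotInt (pow2W D) y ≤ ∑ k : Fin D, (2:ℤ) ^ (k:ℕ) := by
    refine Finset.sum_le_sum fun k _ => ?_
    cases hy : y k <;> simp [pow2W, hy]
  linarith

-- ### the six layers
def L1 (D r : ℕ) (W : ℕ → ℤ) : (Fin D → Bool) → (Fin (r + D) → Bool) :=
  fun inp => Fin.addCases (motive := fun _ => Bool)
    (fun j : Fin r => thrC (pow2W D) (W (j.val * r)) inp)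
    (fun k : Fin D => thrC (fun k' => if k' = k then (1:ℤ) else 0) 1 inp)

def L2 (D r : ℕ) (W : ℕ → ℤ) : (Fin (r + D) → Bool) → (Fin (2 * r) → Bool) :=
  fun inp => (Fin.addCases (motive := fun _ => Bool)
    (fun j' : Fin r =>
      thrC (Fin.addCases (fun k' : Fin r => if k' = j' then (1:ℤ) else 0) (fun _ : Fin D => 0)) 1 inp)
    (fun j' : Fin r =>
      thrC (Fin.addCases (fun k : Fin r => telW (fun t => -W (t * r + j'.val)) k.val) (pow2W D)) 0 inp))
    ∘ (finCongr (two_mul r))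

def L3 (r c : ℕ) : (Fin (2 * r) → Bool) → (Fin (2 * c) → Bool) :=
  fun inp => (Fin.addCases (motive := fun _ => Bool)
    (fun b' : Fin c =>
      thrC ((Fin.addCases (fun k : Fin r => telW (fun t => if Nat.testBit t b'.val then 1 else 0) k.val)
        (fun _ : Fin r => (0:ℤ))) ∘ (finCongr (two_mul r))) 1 inp)
    (fun b' : Fin c =>
      thrC ((Fin.addCases (fun _ : Fin r => (0:ℤ))
        (fun k : Fin r => telW (fun t => if Nat.testBit t b'.val then 1 else 0) k.val)) ∘ (finCongr (two_mul r))) 1 inp))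
    ∘ (finCongr (two_mul c))

def L4 (r c : ℕ) : (Fin (2 * c) → Bool) → (Fin (2 * r) → Bool) :=
  fun inp => (Fin.addCases (motive := fun _ => Bool)
    (fun k : Fin r =>
      thrC ((Fin.addCases (fun b : Fin c => (2:ℤ)^(b:ℕ)) (fun _ : Fin c => (0:ℤ))) ∘ (finCongr (two_mul c))) (k.val : ℤ) inp)
    (fun k : Fin r =>
      thrC ((Fin.addCases (fun _ : Fin c => (0:ℤ)) (fun b : Fin c => (2:ℤ)^(b:ℕ))) ∘ (finCongr (two_mul c))) (k.val : ℤ) inp))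
    ∘ (finCongr (two_mul r))

def L5 (D r : ℕ) (g : Fin r → Fin D → ℕ → Bool) : (Fin (2 * r) → Bool) → (Fin (r * D) → Bool) :=
  fun inp => (fun pq : Fin r × Fin D =>
      thrC ((Fin.addCases
        (fun k : Fin r => telW (fun t => if t = (pq.1 : ℕ) then 0 else -2) k.val)
        (fun k : Fin r => telW (fun t => if g pq.1 pq.2 t then 1 else 0) k.val)) ∘ (finCongr (two_mul r))) 1 inp)
    ∘ (finProdFinEquiv.symm)

def L6 (D r : ℕ) : (Fin (r * D) → Bool) → (Fin D → Bool) :=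
  fun inp k =>
    thrC ((fun pq : Fin r × Fin D => if pq.2 = k then (1:ℤ) else 0) ∘ (finProdFinEquiv.symm)) 1 inp

-- intermediate activation patterns
def st2 (r q m : ℕ) : Fin (2 * r) → Bool :=
  (Fin.addCases (motive := fun _ => Bool) (stepVec r q) (stepVec r m)) ∘ (finCongr (two_mul r))

def bv (c q m : ℕ) : Fin (2 * c) → Bool :=
  (Fin.addCases (motive := fun _ => Bool) (i2b c q) (i2b c m)) ∘ (finCongr (two_mul c))

-- ### layer-ness
lemma L1_layer (D r : ℕ) (W : ℕ → ℤ) : IsThresholdLayer (L1 D r W) := by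
  intro j
  refine Fin.addCases ?_ ?_ j <;> intro j' <;>
    simp only [L1, Fin.addCases_left, Fin.addCases_right] <;> exact thrC_isThreshold _ _

lemma L2_layer (D r : ℕ) (W : ℕ → ℤ) : IsThresholdLayer (L2 D r W) := by
  intro j
  simp only [L2, Function.comp]
  generalize (finCongr (two_mul r)) j = j'
  refine Fin.addCases ?_ ?_ j' <;> intro j'' <;>
    simp only [Fin.addCases_left, Fin.addCases_right] <;> exact thrC_isThreshold _ _

lemma L3_layer (r c : ℕ) : IsThresholdLayer (L3 r c) := by
  intro j
  simp only [L3, Function.comp]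
  generalize (finCongr (two_mul c)) j = j'
  refine Fin.addCases ?_ ?_ j' <;> intro j'' <;>
    simp only [Fin.addCases_left, Fin.addCases_right] <;> exact thrC_isThreshold _ _

lemma L4_layer (r c : ℕ) : IsThresholdLayer (L4 r c) := by
  intro j
  simp only [L4, Function.comp]
  generalize (finCongr (two_mul r)) j = j'
  refine Fin.addCases ?_ ?_ j' <;> intro j'' <;>
    simp only [Fin.addCases_left, Fin.addCases_right] <;> exact thrC_isThreshold _ _

lemma L5_layer (D r : ℕ) (g : Fin r → Fin D → ℕ → Bool) : IsThresholdLayer (L5 D r g) := by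
  intro pk
  simp only [L5, Function.comp]
  exact thrC_isThreshold _ _

lemma L6_layer (D r : ℕ) : IsThresholdLayer (L6 D r) := by
  intro k
  exact thrC_isThreshold _ _

lemma dotInt_zeroW {ι : Type*} [Fintype ι] (u : ι → Bool) : dotInt (fun _ => (0:ℤ)) u = 0 := by
  simp [dotInt]

lemma L1_eval (D r : ℕ) (W : ℕ → ℤ) (y : Fin D → Bool) (q : ℕ)
    (h : ∀ j : Fin r, (W (j.val * r) ≤ dotInt (pow2W D) y ↔ j.val ≤ q)) :
    L1 D r W y = Fin.addCases (motive := fun _ => Bool) (stepVec r q) y := by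
  refine funext_addCases ?_ ?_
  · intro j
    simp only [L1, Fin.addCases_left, thrC, stepVec]
    rw [decide_eq_decide]
    exact h j
  · intro k
    simp only [L1, Fin.addCases_right, thrC, dotInt_single]
    cases hy : y k <;> simp [hy]

lemma L2_eval (D r : ℕ) (W : ℕ → ℤ) (y : Fin D → Bool) (q m : ℕ) (hq : q < r)
    (h : ∀ j : Fin r, (W (q * r + j.val) ≤ dotInt (pow2W D) y ↔ j.val ≤ m)) :
    L2 D r W (Fin.addCases (motive := fun _ => Bool) (stepVec r q) y) = st2 r q m := by
  unfold L2 st2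
  refine congrArg (· ∘ (finCongr (two_mul r))) ?_
  refine funext_addCases ?_ ?_
  · intro j'
    simp only [Fin.addCases_left, thrC, dotInt_addCases, Fin.addCases_right,
      dotInt_single, dotInt_zeroW, add_zero]
    cases hs : stepVec r q j' <;> simp [hs]
  · intro j'
    simp only [Fin.addCases_right, thrC, dotInt_addCases, Fin.addCases_left]
    rw [dotInt_stepVec (fun t => -W (t * r + j'.val)) hq]
    show decide _ = stepVec r m j'
    simp only [stepVec]
    rw [decide_eq_decide, ← h j']
    constructor <;> intro <;> linarith

lemma L3_eval (r c q m : ℕ) (hq : q < r) (hm : m < r) :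
    L3 r c (st2 r q m) = bv c q m := by
  unfold L3 st2 bv
  refine congrArg (· ∘ (finCongr (two_mul c))) ?_
  refine funext_addCases ?_ ?_ <;> intro b' <;>
    simp only [Fin.addCases_left, Fin.addCases_right, thrC] <;>
    rw [dotInt_comp', dotInt_addCases] <;>
    simp only [Fin.addCases_left, Fin.addCases_right]
  · rw [dotInt_stepVec (fun t => if Nat.testBit t b'.val then (1:ℤ) else 0) hq, dotInt_zeroW,
      add_zero]
    cases hb : Nat.testBit q b'.val <;> simp [i2b, hb]
  · rw [dotInt_stepVec (fun t => if Nat.testBit t b'.val then (1:ℤ) else 0) hm, dotInt_zeroW,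
      zero_add]
    cases hb : Nat.testBit m b'.val <;> simp [i2b, hb]

lemma L4_eval (r c q m : ℕ) (hq : q < 2 ^ c) (hm : m < 2 ^ c) :
    L4 r c (bv c q m) = st2 r q m := by
  unfold L4 bv st2
  refine congrArg (· ∘ (finCongr (two_mul r))) ?_
  refine funext_addCases ?_ ?_ <;> intro k <;>
    simp only [Fin.addCases_left, Fin.addCases_right, thrC] <;>
    rw [dotInt_comp', dotInt_addCases] <;>
    simp only [Fin.addCases_left, Fin.addCases_right]
  · rw [dotInt_bits c q hq, dotInt_zeroW, add_zero]
    simp only [stepVec]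
    rw [decide_eq_decide]
    exact Nat.cast_le
  · rw [dotInt_bits c m hm, dotInt_zeroW, zero_add]
    simp only [stepVec]
    rw [decide_eq_decide]
    exact Nat.cast_le

lemma L5_eval (D r : ℕ) (g : Fin r → Fin D → ℕ → Bool) (q m : ℕ) (hq : q < r) (hm : m < r) :
    L5 D r g (st2 r q m)
      = (fun pq : Fin r × Fin D => decide ((pq.1 : ℕ) = q) && g pq.1 pq.2 m)
          ∘ (finProdFinEquiv.symm) := by
  unfold L5 st2
  refine congrArg (· ∘ ⇑(finProdFinEquiv.symm)) ?_
  funext pq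
  simp only [thrC]
  rw [dotInt_comp', dotInt_addCases]
  simp only [Fin.addCases_left, Fin.addCases_right]
  rw [dotInt_stepVec (fun t => if t = (pq.1 : ℕ) then (0:ℤ) else -2) hq,
    dotInt_stepVec (fun t => if g pq.1 pq.2 t then (1:ℤ) else 0) hm]
  by_cases hpq : q = (pq.1 : ℕ)
  · have h2 : ((pq.1 : ℕ) = q) := hpq.symm
    cases hg : g pq.1 pq.2 m <;> rw [if_pos hpq] <;> norm_num [h2]
  · have h2 : ¬ ((pq.1 : ℕ) = q) := fun h => hpq h.symm
    cases hg : g pq.1 pq.2 m <;> rw [if_neg hpq] <;> norm_num [h2]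

lemma L6_eval (D r : ℕ) (q : ℕ) (hq : q < r) (y : Fin D → Bool) :
    L6 D r ((fun pq : Fin r × Fin D => decide ((pq.1 : ℕ) = q) && y pq.2)
      ∘ (finProdFinEquiv.symm)) = y := by
  funext k
  simp only [L6, thrC]
  rw [dotInt_comp' (finProdFinEquiv.symm)]
  rw [dotInt, Fintype.sum_prod_type]
  have hin : ∀ p : Fin r,
      (∑ k' : Fin D, (if k' = k then (1:ℤ) else 0)
        * (if (decide ((p:ℕ) = q) && y k') then 1 else 0))
      = if (decide ((p:ℕ) = q) && y k) then 1 else 0 := by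
    intro p
    have h : ∀ k' : Fin D, (if k' = k then (1:ℤ) else 0)
        * (if (decide ((p:ℕ) = q) && y k') then 1 else 0)
        = if k' = k then (if (decide ((p:ℕ) = q) && y k') then (1:ℤ) else 0) else 0 := fun k' => by
      rw [ite_mul, one_mul, zero_mul]
    rw [Finset.sum_congr rfl fun k' _ => h k', Finset.sum_ite_eq' Finset.univ k]
    simp
  rw [Finset.sum_congr rfl fun p _ => hin p]
  cases hy : y k
  · simp [hy]
  · have h2 : ∀ p : Fin r, (if (decide ((p:ℕ) = q) && true) then (1:ℤ) else 0)
        = if p = ⟨q, hq⟩ then 1 else 0 := by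
      intro p
      by_cases hp : p = ⟨q, hq⟩
      · simp [hp]
      · have hv : ¬ ((p:ℕ) = q) := fun hval => hp (Fin.ext hval)
        simp [hv, hp]
    rw [Finset.sum_congr rfl fun p _ => h2 p, Finset.sum_ite_eq' Finset.univ]
    simp

/-- a seven-layer BTN perfect autoencoder with layer sizes
`D`, `r+D`, `2r`, `2⌈log₂ r⌉`, `2r`, `rD`, `D`, where `r = ⌈√n⌉`
(so the middle hidden layer has `2⌈log₂ √n⌉` nodes). -/
theorem stmt_19 (D n r : ℕ) (hr : r = ⌈Real.sqrt n⌉₊)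
    (x : Fin n → Fin D → Bool) (hx : Function.Injective x) :
    ∃ (F₁ : (Fin D → Bool) → (Fin (r + D) → Bool))
      (F₂ : (Fin (r + D) → Bool) → (Fin (2 * r) → Bool))
      (F₃ : (Fin (2 * r) → Bool) → (Fin (2 * Nat.clog 2 r) → Bool))
      (F₄ : (Fin (2 * Nat.clog 2 r) → Bool) → (Fin (2 * r) → Bool))
      (F₅ : (Fin (2 * r) → Bool) → (Fin (r * D) → Bool))
      (F₆ : (Fin (r * D) → Bool) → (Fin D → Bool)),
      IsThresholdLayer F₁ ∧ IsThresholdLayer F₂ ∧ IsThresholdLayer F₃ ∧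
      IsThresholdLayer F₄ ∧ IsThresholdLayer F₅ ∧ IsThresholdLayer F₆ ∧
      ∀ i, F₆ (F₅ (F₄ (F₃ (F₂ (F₁ (x i)))))) = x i := by
  classical
  have hnr : n ≤ r * r := by
    have h1 : Real.sqrt n ≤ (r : ℝ) := by rw [hr]; exact Nat.le_ceil _
    have h2 : (n : ℝ) ≤ (r : ℝ) * r := by
      nlinarith [Real.sq_sqrt (show (0:ℝ) ≤ n by positivity), Real.sqrt_nonneg (n:ℝ)]
    exact_mod_cast h2
  set c := Nat.clog 2 r with hc
  set V : Fin n → ℤ := fun i => dotInt (pow2W D) (x i) with hV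
  have hVinj : Function.Injective V := fun i j h => hx (valB_inj D h)
  set σ : Equiv.Perm (Fin n) := Tuple.sort V with hσ
  have hsm : StrictMono (V ∘ σ) :=
    (Tuple.monotone_sort V).strictMono_of_injective (hVinj.comp σ.injective)
  set B : ℤ := (∑ k : Fin D, (2:ℤ) ^ (k:ℕ)) + 1 with hB
  set W : ℕ → ℤ := fun t => if h : t < n then V (σ ⟨t, h⟩) else B with hW
  set g : Fin r → Fin D → ℕ → Bool :=
    fun p k t => if h : (p:ℕ) * r + t < n then x (σ ⟨(p:ℕ) * r + t, h⟩) k else false with hg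
  refine ⟨L1 D r W, L2 D r W, L3 r c, L4 r c, L5 D r g, L6 D r,
    L1_layer D r W, L2_layer D r W, L3_layer r c, L4_layer r c, L5_layer D r g,
    L6_layer D r, ?_⟩
  intro i
  have hr0 : 0 < r := by
    rcases Nat.eq_zero_or_pos r with h | h
    · exfalso; have hi := i.isLt; subst h; simp at hnr; omega
    · exact h
  set ρ : ℕ := ((σ.symm i : Fin n) : ℕ) with hρ
  have hρn : ρ < n := (σ.symm i).isLt
  have hcmp : ∀ t : ℕ, (W t ≤ V i ↔ t ≤ ρ) := by
    intro t
    by_cases h : t < n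
    · have hWt : W t = (V ∘ σ) ⟨t, h⟩ := by rw [hW]; simp [h]
      have hVi : V i = (V ∘ σ) (σ.symm i) := by simp
      rw [hWt, hVi, hsm.le_iff_le]
      simp [Fin.le_def, hρ]
    · have hWt : W t = B := by rw [hW]; simp [h]
      have hVB : V i < B := valB_lt D (x i)
      rw [hWt]
      constructor
      · intro hle; exfalso; linarith
      · intro hle; exfalso; omega
  have hq : ρ / r < r := (Nat.div_lt_iff_lt_mul hr0).mpr (lt_of_lt_of_le hρn hnr)
  have hm : ρ % r < r := Nat.mod_lt _ hr0
  have hdm : ρ / r * r + ρ % r = ρ := Nat.div_add_mod' ρ r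
  have hq2 : ρ / r < 2 ^ c := lt_of_lt_of_le hq (by rw [hc]; exact Nat.le_pow_clog (by norm_num) r)
  have hm2 : ρ % r < 2 ^ c := lt_of_lt_of_le hm (by rw [hc]; exact Nat.le_pow_clog (by norm_num) r)
  have h1 : ∀ j : Fin r, (W (j.val * r) ≤ dotInt (pow2W D) (x i) ↔ j.val ≤ ρ / r) := by
    intro j
    exact (hcmp (j.val * r)).trans (Nat.le_div_iff_mul_le hr0).symm
  have h2 : ∀ j : Fin r, (W (ρ / r * r + j.val) ≤ dotInt (pow2W D) (x i) ↔ j.val ≤ ρ % r) := by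
    intro j
    have hjr := j.isLt
    refine (hcmp _).trans ?_
    have hdm' := hdm
    have hm' := hm
    generalize hA : ρ / r * r = A at hdm' ⊢
    generalize hBm : ρ % r = Bm at hdm' hm' ⊢
    omega
  rw [L1_eval D r W (x i) (ρ / r) h1, L2_eval D r W (x i) (ρ / r) (ρ % r) hq h2,
    L3_eval r c (ρ / r) (ρ % r) hq hm, L4_eval r c (ρ / r) (ρ % r) hq2 hm2,
    L5_eval D r g (ρ / r) (ρ % r) hq hm]
  have hfun : (fun pq : Fin r × Fin D => decide ((pq.1 : ℕ) = ρ / r) && g pq.1 pq.2 (ρ % r))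
      = (fun pq : Fin r × Fin D => decide ((pq.1 : ℕ) = ρ / r) && x i pq.2) := by
    funext pq
    by_cases hp : (pq.1 : ℕ) = ρ / r
    · have hlt : (pq.1 : ℕ) * r + ρ % r < n := by rw [hp, hdm]; exact hρn
      have hgv : g pq.1 pq.2 (ρ % r) = x i pq.2 := by
        rw [hg]
        simp only [dif_pos hlt]
        have hfin : (⟨(pq.1 : ℕ) * r + ρ % r, hlt⟩ : Fin n) = σ.symm i := by
          apply Fin.ext
          simp [hp, hdm, hρ, Nat.div_add_mod']
        rw [hfin, Equiv.apply_symm_apply]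
      rw [hgv]
    · simp [hp]
  rw [hfun, L6_eval D r (ρ / r) hq (x i)]
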